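/- For every integer m ≥ 5 divisible by 4, the (m−2)×m real matrix B_m^− obtained from the circulant matrix B_m by deleting its last two rows has full row rank; equivalently, the linear map ℝ^m → ℝ^{m−2} given by w ↦ B_m^− w is surjective. -/

import Mathlib

/-- The m×m circulant matrix with entries 1 at positions `j ≡ i+1 (mod m)` and
`j ≡ i−1 (mod m)`, and 0 otherwise. -/
def Bmat (m : ℕ) : Matrix (Fin m) (Fin m) ℝ :=
  Matrix.of fun i j => if j.val = (i.val + 1) % m ∨ j.val = (i.val + m - 1) % m then 1 else 0

/-- Auxiliary two-step recursion solving `g (j+2) + g j = d (j+1)`. -/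
def padAux (d : ℕ → ℝ) : ℕ → ℝ
  | 0 => 0
  | 1 => 0
  | (j+2) => d (j+1) - padAux d j

lemma Bmat_mulVec (m : ℕ) (hm : 5 ≤ m) (w : Fin m → ℝ) (i : Fin m) :
    (Bmat m).mulVec w i
      = w ⟨(i.val + 1) % m, Nat.mod_lt _ (by omega)⟩
        + w ⟨(i.val + m - 1) % m, Nat.mod_lt _ (by omega)⟩ := by
  set fa : Fin m := ⟨(i.val + 1) % m, Nat.mod_lt _ (by omega)⟩
  set fb : Fin m := ⟨(i.val + m - 1) % m, Nat.mod_lt _ (by omega)⟩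
  have hne : fa ≠ fb := by
    intro h
    have h' : Nat.ModEq m (i.val + 1) (i.val + m - 1) := by
      have := congrArg Fin.val h
      simpa [fa, fb, Nat.ModEq] using this
    have hd : (m : ℤ) ∣ ((i.val + m - 1 : ℕ) : ℤ) - ((i.val + 1 : ℕ) : ℤ) :=
      (Nat.modEq_iff_dvd).mp h'
    have hcast : ((i.val + m - 1 : ℕ) : ℤ) - ((i.val + 1 : ℕ) : ℤ) = (m : ℤ) - 2 := by
      have : (i.val + m - 1 : ℕ) = i.val + m - 1 := rfl
      push_cast [Nat.cast_sub (by omega : 1 ≤ i.val + m)]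
      ring
    rw [hcast] at hd
    have hd2 : (m : ℤ) ∣ 2 := by simpa using dvd_sub (dvd_refl (m:ℤ)) hd
    have := Int.le_of_dvd (by norm_num) hd2
    omega
  have key : ∀ j : Fin m,
      (if j.val = (i.val + 1) % m ∨ j.val = (i.val + m - 1) % m then (1:ℝ) else 0) * w j
        = (if j = fa then w j else 0) + (if j = fb then w j else 0) := by
    intro j
    have ha : (j.val = (i.val + 1) % m) ↔ j = fa := by
      rw [Fin.ext_iff]
    have hb : (j.val = (i.val + m - 1) % m) ↔ j = fb := by
      rw [Fin.ext_iff]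
    by_cases h1 : j = fa
    · by_cases h2 : j = fb
      · exact absurd (h1.symm.trans h2) hne
      · simp only [ha, hb]; simp [h1, h2, hne]
    · by_cases h2 : j = fb <;> simp only [ha, hb] <;> simp [h1, h2, hne, hne.symm]
  unfold Bmat Matrix.mulVec dotProduct
  simp only [Matrix.of_apply]
  rw [Finset.sum_congr rfl (fun j _ => key j), Finset.sum_add_distrib,
    Finset.sum_ite_eq' Finset.univ fa, Finset.sum_ite_eq' Finset.univ fb]
  simp

/-- For `m ≥ 5` divisible by 4, the (m−2)×m matrix `B_m^−` obtained from `B_m` by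
deleting its last two rows has full row rank: the map `w ↦ B_m^− w` is surjective. -/
theorem Bmat_deleteLastTwoRows_surjective (m : ℕ) (hm : 5 ≤ m) (h4 : 4 ∣ m) :
    Function.Surjective (fun w : Fin m → ℝ => fun i : Fin (m - 2) =>
      (Bmat m).mulVec w ⟨i.val, lt_of_lt_of_le i.isLt (Nat.sub_le m 2)⟩) := by
  intro d
  set d' : ℕ → ℝ := fun k => if h : k < m - 2 then d ⟨k, h⟩ else 0 with hd'
  refine ⟨fun j => if j.val = m - 1 then d' 0 else padAux d' j.val, ?_⟩
  funext i
  have hi : i.val < m - 2 := i.isLt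
  show (Bmat m).mulVec _ ⟨i.val, lt_of_lt_of_le i.isLt (Nat.sub_le m 2)⟩ = d i
  rw [Bmat_mulVec m hm]
  rcases Nat.eq_zero_or_pos i.val with h0 | hpos
  · -- row 0
    have h1 : (i.val + 1) % m = 1 := by rw [h0]; exact Nat.mod_eq_of_lt (by omega)
    have h2 : (i.val + m - 1) % m = m - 1 := by rw [h0, Nat.zero_add]; exact Nat.mod_eq_of_lt (by omega)
    rw [show ((⟨(i.val + 1) % m, _⟩ : Fin m) : Fin m) = ⟨1, by omega⟩ from Fin.ext h1,
        show ((⟨(i.val + m - 1) % m, _⟩ : Fin m) : Fin m) = ⟨m - 1, by omega⟩ from Fin.ext h2]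
    simp only [if_neg (by omega : ¬ (1 = m - 1)), if_pos rfl]
    show padAux d' 1 + d' 0 = d i
    have : d' 0 = d i := by
      rw [hd']
      simp only [dif_pos (by omega : 0 < m - 2)]
      congr 1
      exact (Fin.ext h0.symm)
    rw [this, padAux]
    ring
  · -- row i ≥ 1
    obtain ⟨k, hk⟩ : ∃ k, i.val = k + 1 := ⟨i.val - 1, by omega⟩
    have h1 : (i.val + 1) % m = k + 2 := by rw [hk]; exact Nat.mod_eq_of_lt (by omega)
    have h2 : (i.val + m - 1) % m = k := by
      rw [hk, show k + 1 + m - 1 = k + m by omega, Nat.add_mod_right]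
      exact Nat.mod_eq_of_lt (by omega)
    rw [show ((⟨(i.val + 1) % m, _⟩ : Fin m) : Fin m) = ⟨k + 2, by omega⟩ from Fin.ext h1,
        show ((⟨(i.val + m - 1) % m, _⟩ : Fin m) : Fin m) = ⟨k, by omega⟩ from Fin.ext h2]
    simp only [if_neg (by omega : ¬ (k + 2 = m - 1)), if_neg (by omega : ¬ (k = m - 1))]
    show padAux d' (k + 2) + padAux d' k = d i
    rw [padAux]
    have : d' (k + 1) = d i := by
      rw [hd']
      simp only [dif_pos (by omega : k + 1 < m - 2)]
      congr 1
      exact (Fin.ext hk.symm)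
    rw [this]
    ring
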